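/- arXiv:0709.0454 — 3 statements merged into one kernel-verified Lean document; each statement's English description precedes it below -/
import Mathlib

section
/- Let A, B, C be three non-collinear points in the Euclidean plane, with incenter I and excenters E_A, E_B, E_C. Let X, Y be two distinct vertices among A, B, C, and write E_X, E_Y for the corresponding excenters. Then the unsigned angle ∠ I E_Y E_X (at vertex E_Y) equals the unsigned angle ∠ I X Y (at vertex X), which is half of the interior angle of the triangle at X. In particular ∠ I E_B E_A = ∠ I A B and ∠ I E_C E_A = ∠ I A C, and these two are equal. -/
open EuclideanGeometry

/-- The incenter of the triangle `A B C`. -/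
noncomputable def incenterPt (A B C : EuclideanSpace ℝ (Fin 2)) : EuclideanSpace ℝ (Fin 2) :=
  (dist B C + dist C A + dist A B)⁻¹ •
    (dist B C • A + dist C A • B + dist A B • C)

/-- The excenter of the triangle `A B C` opposite the first vertex `A`. -/
noncomputable def excenterPt (A B C : EuclideanSpace ℝ (Fin 2)) : EuclideanSpace ℝ (Fin 2) :=
  (-dist B C + dist C A + dist A B)⁻¹ •
    ((-dist B C) • A + dist C A • B + dist A B • C)

namespace InnerProductGeometry

open scoped RealInnerProductSpace

private lemma core_aux {V : Type*} [NormedAddCommGroup V] [InnerProductSpace ℝ V]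
    (e f : V) (a b c : ℝ)
    (hc : ‖e‖ = c) (hb : ‖f‖ = b) (ha : ‖e - f‖ = a)
    (ha0 : 0 < a) (hb0 : 0 < b) (hc0 : 0 < c)
    (hp : 0 < -a + b + c) (hq : 0 < a - b + c) :
    angle ((a+c) • e - c • f) (b • e + (a-b) • f) = angle (b • e + c • f) e ∧
    angle (b • e + c • f) e = angle e f / 2 := by
  have he : ⟪e, e⟫ = c ^ 2 := by rw [real_inner_self_eq_norm_sq, hc]
  have hf : ⟪f, f⟫ = b ^ 2 := by rw [real_inner_self_eq_norm_sq, hb]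
  have hef : 2 * ⟪e, f⟫ = b ^ 2 + c ^ 2 - a ^ 2 := by
    have h1 := norm_sub_sq_real e f
    rw [ha, hb, hc] at h1
    linarith
  have hs : 0 < a + b + c := by linarith
  have hbc : 0 < b * c * ((-a+b+c) * (a+b+c)) := mul_pos (mul_pos hb0 hc0) (mul_pos hp hs)
  have hac : 0 < a * c * ((a-b+c) * (a+b+c)) := mul_pos (mul_pos ha0 hc0) (mul_pos hq hs)
  have hab : 0 < a * b * ((-a+b+c) * (a-b+c)) := mul_pos (mul_pos ha0 hb0) (mul_pos hp hq)
  have n1 : ‖b • e + c • f‖ ^ 2 = b * c * ((-a+b+c) * (a+b+c)) := by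
    rw [← real_inner_self_eq_norm_sq]
    simp only [inner_add_left, inner_add_right, real_inner_smul_left, real_inner_smul_right,
      real_inner_comm e f]
    linear_combination b^2 * he + c^2 * hf + (b*c) * hef
  have n2 : ‖(a+c) • e - c • f‖ ^ 2 = a * c * ((a-b+c) * (a+b+c)) := by
    rw [← real_inner_self_eq_norm_sq]
    simp only [inner_sub_left, inner_sub_right, inner_add_left, inner_add_right,
      real_inner_smul_left, real_inner_smul_right, real_inner_comm e f]
    linear_combination (a+c)^2 * he + c^2 * hf - ((a+c)*c) * hef
  have n3 : ‖b • e + (a-b) • f‖ ^ 2 = a * b * ((-a+b+c) * (a-b+c)) := by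
    rw [← real_inner_self_eq_norm_sq]
    simp only [inner_add_left, inner_add_right, real_inner_smul_left, real_inner_smul_right,
      real_inner_comm e f]
    linear_combination b^2 * he + (a-b)^2 * hf + (b*(a-b)) * hef
  have i1 : ⟪b • e + c • f, e⟫ = c * ((-a+b+c) * (a+b+c)) / 2 := by
    simp only [inner_add_left, real_inner_smul_left, real_inner_comm e f]
    linear_combination b * he + (c/2) * hef
  have i2 : ⟪(a+c) • e - c • f, b • e + (a-b) • f⟫ = (a * (a-b+c)) * ((-a+b+c) * (a+b+c)) / 2 := by
    simp only [inner_sub_left, inner_add_right, real_inner_smul_left, real_inner_smul_right,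
      real_inner_comm e f]
    linear_combination ((a+c)*b) * he - (c*(a-b)) * hf + (((a+c)*(a-b) - c*b)/2) * hef
  have hN1 : ‖b • e + c • f‖ = Real.sqrt (b * c * ((-a+b+c) * (a+b+c))) := by
    rw [← Real.sqrt_sq (norm_nonneg _), n1]
  have hM1 : ‖(a+c) • e - c • f‖ = Real.sqrt (a * c * ((a-b+c) * (a+b+c))) := by
    rw [← Real.sqrt_sq (norm_nonneg _), n2]
  have hM2 : ‖b • e + (a-b) • f‖ = Real.sqrt (a * b * ((-a+b+c) * (a-b+c))) := by
    rw [← Real.sqrt_sq (norm_nonneg _), n3]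
  have hSpos : 0 < Real.sqrt (b * c * ((-a+b+c) * (a+b+c))) := Real.sqrt_pos.2 hbc
  have hS2 : (Real.sqrt (b * c * ((-a+b+c) * (a+b+c)))) ^ 2 = b * c * ((-a+b+c) * (a+b+c)) :=
    Real.sq_sqrt hbc.le
  have key : Real.sqrt (a * c * ((a-b+c) * (a+b+c))) * Real.sqrt (a * b * ((-a+b+c) * (a-b+c)))
      = (a * (a-b+c)) * Real.sqrt (b * c * ((-a+b+c) * (a+b+c))) := by
    rw [← Real.sqrt_mul hac.le]
    rw [show a * c * ((a-b+c) * (a+b+c)) * (a * b * ((-a+b+c) * (a-b+c)))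
        = (a * (a-b+c)) ^ 2 * (b * c * ((-a+b+c) * (a+b+c))) by ring]
    rw [Real.sqrt_mul (sq_nonneg _), Real.sqrt_sq (mul_pos ha0 hq).le]
  constructor
  · apply Real.injOn_cos ⟨angle_nonneg _ _, angle_le_pi _ _⟩ ⟨angle_nonneg _ _, angle_le_pi _ _⟩
    rw [cos_angle, cos_angle, i1, i2, hN1, hM1, hM2, hc, key]
    rw [div_eq_div_iff (by positivity) (by positivity)]
    ring
  · have hbounds : angle e f ∈ Set.Icc (0:ℝ) Real.pi := ⟨angle_nonneg _ _, angle_le_pi _ _⟩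
    apply Real.injOn_cos ⟨angle_nonneg _ _, angle_le_pi _ _⟩
      ⟨by linarith [hbounds.1], by linarith [hbounds.2, Real.pi_pos]⟩
    rw [Real.cos_half (by linarith [hbounds.1, Real.pi_pos]) hbounds.2]
    rw [cos_angle, cos_angle, i1, hN1, hc, hb]
    have harg : (1 + ⟪e, f⟫ / (c * b)) / 2 = ((-a+b+c) * (a+b+c)) / (4 * (b * c)) := by
      field_simp
      linear_combination 2 * hef
    rw [harg]
    have hx : 0 ≤ c * ((-a+b+c) * (a+b+c)) / 2 /
        (Real.sqrt (b * c * ((-a+b+c) * (a+b+c))) * c) := by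
      have h1 : 0 < c * ((-a+b+c) * (a+b+c)) / 2 := by
        have := mul_pos hc0 (mul_pos hp hs); linarith
      exact (div_pos h1 (mul_pos hSpos hc0)).le
    have hsq : ((-a+b+c) * (a+b+c)) / (4 * (b * c))
        = (c * ((-a+b+c) * (a+b+c)) / 2 /
          (Real.sqrt (b * c * ((-a+b+c) * (a+b+c))) * c)) ^ 2 := by
      rw [div_pow, mul_pow, hS2]
      rw [div_eq_div_iff (by positivity) (by positivity)]
      ring
    rw [hsq, Real.sqrt_sq hx]

end InnerProductGeometry

private lemma incenterPt_swap (A B C : EuclideanSpace ℝ (Fin 2)) :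
    incenterPt A B C = incenterPt A C B := by
  simp only [incenterPt, dist_comm C B, dist_comm B A, dist_comm A C]
  rw [show dist B C + dist A B + dist C A = dist B C + dist C A + dist A B by ring]
  congr 1
  module

private lemma incenterPt_cycle (A B C : EuclideanSpace ℝ (Fin 2)) :
    incenterPt A B C = incenterPt B C A := by
  simp only [incenterPt]
  rw [show dist C A + dist A B + dist B C = dist B C + dist C A + dist A B by ring]
  congr 1
  module

private lemma excenterPt_swap (A B C : EuclideanSpace ℝ (Fin 2)) :
    excenterPt A B C = excenterPt A C B := by
  simp only [excenterPt, dist_comm C B, dist_comm B A, dist_comm A C]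
  rw [show -dist B C + dist A B + dist C A = -dist B C + dist C A + dist A B by ring]
  congr 1
  module

private lemma master (X Y Z : EuclideanSpace ℝ (Fin 2))
    (hncol : ¬ Collinear ℝ ({X, Y, Z} : Set (EuclideanSpace ℝ (Fin 2)))) :
    ∠ (incenterPt X Y Z) (excenterPt Y Z X) (excenterPt X Y Z) = ∠ (incenterPt X Y Z) X Y ∧
    ∠ (incenterPt X Y Z) X Y = ∠ Y X Z / 2 := by
  have hXY : X ≠ Y := by
    rintro rfl; exact hncol (by simpa using (collinear_pair ℝ X Z))
  have hYZ : Y ≠ Z := by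
    rintro rfl; exact hncol (by
      rw [show ({X, Y, Y} : Set (EuclideanSpace ℝ (Fin 2))) = {X, Y} from by ext x; simp]
      exact collinear_pair ℝ X Y)
  have hXZ : X ≠ Z := by
    rintro rfl; exact hncol (by
      rw [show ({X, Y, X} : Set _) = {X, Y} by ext x; simp; tauto]
      exact collinear_pair ℝ X Y)
  have ha0 : 0 < dist Y Z := dist_pos.2 hYZ
  have hb0 : 0 < dist Z X := dist_pos.2 (Ne.symm hXZ)
  have hc0 : 0 < dist X Y := dist_pos.2 hXY
  have hp : dist Y Z < dist Z X + dist X Y := by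
    refine lt_of_le_of_ne ?_ ?_
    · have := dist_triangle Y X Z
      rw [dist_comm Y X, dist_comm X Z] at this; linarith
    · intro heq
      have hw : Wbtw ℝ Y X Z := by
        rw [← dist_add_dist_eq_iff, dist_comm Y X, dist_comm X Z]; linarith
      exact hncol (by
        rw [Set.insert_comm]
        exact hw.collinear)
  have hq : dist Z X < dist Y Z + dist X Y := by
    refine lt_of_le_of_ne ?_ ?_
    · have := dist_triangle Z Y X
      rw [dist_comm Z Y, dist_comm Y X] at this; linarith
    · intro heq
      have hw : Wbtw ℝ Z Y X := by
        rw [← dist_add_dist_eq_iff, dist_comm Z Y, dist_comm Y X]; linarith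
      have := hw.collinear
      exact hncol (by
        rw [show ({X, Y, Z} : Set _) = {Z, Y, X} by ext x; simp; tauto]
        exact this)
  set a := dist Y Z with ha_def
  set b := dist Z X with hb_def
  set c := dist X Y with hc_def
  have hsne : a + b + c ≠ 0 := by positivity
  have hpne : -a + b + c ≠ 0 := by intro h0; linarith
  have hqne : a - b + c ≠ 0 := by intro h0; linarith
  have hspos : (0:ℝ) < a + b + c := by linarith
  have hppos : (0:ℝ) < -a + b + c := by linarith
  have hqpos : (0:ℝ) < a - b + c := by linarith
  have ne1 : -b + c + a ≠ 0 := by intro h0; linarith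
  have ne2 : -b + a + c ≠ 0 := by intro h0; linarith
  have ne3 : c + (a - b) ≠ 0 := by intro h0; linarith
  have ne4 : -a + c + b ≠ 0 := by intro h0; linarith
  have ne5 : -a + b + c ≠ 0 := by intro h0; linarith
  have ne6 : c + (b - a) ≠ 0 := by intro h0; linarith
  have ne7 : b + c + a ≠ 0 := by intro h0; linarith
  have ne8 : c + b + a ≠ 0 := by intro h0; linarith
  have ne9 : c + (b + a) ≠ 0 := by intro h0; linarith
  have ne10 : a + (b + c) ≠ 0 := by intro h0; linarith
  have ne11 : b - a + c ≠ 0 := by intro h0; linarith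
  have ne12 : b + a + c ≠ 0 := by intro h0; linarith
  have h1 : incenterPt X Y Z - X = ((a + b + c)⁻¹ : ℝ) • (b • (Y - X) + c • (Z - X)) := by
    simp only [incenterPt, ← ha_def, ← hb_def, ← hc_def]
    match_scalars <;>
      field_simp [hsne, hpne, hqne, ne1, ne2, ne3, ne4, ne5, ne6, ne7, ne8, ne9, ne10, ne11,
        ne12] <;> ring
  have h2 : incenterPt X Y Z - excenterPt Y Z X
      = (2 * b / ((a + b + c) * (a - b + c))) • ((a + c) • (Y - X) - c • (Z - X)) := by
    simp only [incenterPt, excenterPt, ← ha_def, ← hb_def, ← hc_def]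
    match_scalars <;>
      field_simp [hsne, hpne, hqne, ne1, ne2, ne3, ne4, ne5, ne6, ne7, ne8, ne9, ne10, ne11,
        ne12] <;> ring
  have h3 : excenterPt X Y Z - excenterPt Y Z X
      = (2 * c / ((-a + b + c) * (a - b + c))) • (b • (Y - X) + (a - b) • (Z - X)) := by
    simp only [incenterPt, excenterPt, ← ha_def, ← hb_def, ← hc_def]
    match_scalars <;>
      field_simp [hsne, hpne, hqne, ne1, ne2, ne3, ne4, ne5, ne6, ne7, ne8, ne9, ne10, ne11,
        ne12] <;> ring
  have hce : ‖Y - X‖ = c := by rw [hc_def, dist_comm, dist_eq_norm]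
  have hbe : ‖Z - X‖ = b := by rw [hb_def, dist_eq_norm]
  have hae : ‖(Y - X) - (Z - X)‖ = a := by
    rw [show (Y - X) - (Z - X) = Y - Z by abel, ha_def, dist_eq_norm]
  have hcore := InnerProductGeometry.core_aux (Y - X) (Z - X) a b c hce hbe hae ha0 hb0 hc0
    (by linarith) (by linarith)
  have hIA : ∠ (incenterPt X Y Z) X Y
      = InnerProductGeometry.angle (b • (Y - X) + c • (Z - X)) (Y - X) := by
    rw [EuclideanGeometry.angle, vsub_eq_sub, vsub_eq_sub, h1]
    exact InnerProductGeometry.angle_smul_left_of_pos _ _ (inv_pos.2 hspos)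
  constructor
  · rw [hIA, EuclideanGeometry.angle, vsub_eq_sub, vsub_eq_sub, h2, h3]
    rw [InnerProductGeometry.angle_smul_left_of_pos _ _
      (div_pos (by linarith) (mul_pos hspos hqpos) : (0:ℝ) < 2 * b / ((a + b + c) * (a - b + c)))]
    rw [InnerProductGeometry.angle_smul_right_of_pos _ _
      (div_pos (by linarith) (mul_pos hppos hqpos) : (0:ℝ) < 2 * c / ((-a + b + c) * (a - b + c)))]
    exact hcore.1
  · rw [hIA]
    rw [show ∠ Y X Z = InnerProductGeometry.angle (Y - X) (Z - X) by
      rw [EuclideanGeometry.angle, vsub_eq_sub, vsub_eq_sub]]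
    exact hcore.2

/-- For any two distinct vertices `X, Y` among `A, B, C` with corresponding excenters
`E_X, E_Y`, the unsigned angle `∠ I E_Y E_X` equals `∠ I X Y`, which is half the
interior angle of the triangle at `X`.  Stated for all six ordered pairs of distinct
vertices, with `I` the incenter, `E_A = excenterPt A B C`, `E_B = excenterPt B C A`,
`E_C = excenterPt C A B`. -/
theorem angle_incenter_excenter (A B C : EuclideanSpace ℝ (Fin 2))
    (h : AffineIndependent ℝ ![A, B, C])
    (I : EuclideanSpace ℝ (Fin 2)) (hI : I = incenterPt A B C)
    (EA : EuclideanSpace ℝ (Fin 2)) (hEA : EA = excenterPt A B C)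
    (EB : EuclideanSpace ℝ (Fin 2)) (hEB : EB = excenterPt B C A)
    (EC : EuclideanSpace ℝ (Fin 2)) (hEC : EC = excenterPt C A B) :
    (∠ I EB EA = ∠ I A B ∧ ∠ I A B = ∠ B A C / 2) ∧
    (∠ I EC EA = ∠ I A C ∧ ∠ I A C = ∠ B A C / 2) ∧
    (∠ I EA EB = ∠ I B A ∧ ∠ I B A = ∠ A B C / 2) ∧
    (∠ I EC EB = ∠ I B C ∧ ∠ I B C = ∠ A B C / 2) ∧
    (∠ I EA EC = ∠ I C A ∧ ∠ I C A = ∠ A C B / 2) ∧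
    (∠ I EB EC = ∠ I C B ∧ ∠ I C B = ∠ A C B / 2) := by
  subst hI hEA hEB hEC
  have hncol : ¬ Collinear ℝ ({A, B, C} : Set (EuclideanSpace ℝ (Fin 2))) :=
    affineIndependent_iff_not_collinear_set.mp h
  have nc2 : ¬ Collinear ℝ ({A, C, B} : Set (EuclideanSpace ℝ (Fin 2))) := by
    rw [show ({A, C, B} : Set _) = {A, B, C} by ext x; simp; tauto]; exact hncol
  have nc3 : ¬ Collinear ℝ ({B, A, C} : Set (EuclideanSpace ℝ (Fin 2))) := by
    rw [show ({B, A, C} : Set _) = {A, B, C} by ext x; simp; tauto]; exact hncol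
  have nc4 : ¬ Collinear ℝ ({B, C, A} : Set (EuclideanSpace ℝ (Fin 2))) := by
    rw [show ({B, C, A} : Set _) = {A, B, C} by ext x; simp; tauto]; exact hncol
  have nc5 : ¬ Collinear ℝ ({C, A, B} : Set (EuclideanSpace ℝ (Fin 2))) := by
    rw [show ({C, A, B} : Set _) = {A, B, C} by ext x; simp; tauto]; exact hncol
  have nc6 : ¬ Collinear ℝ ({C, B, A} : Set (EuclideanSpace ℝ (Fin 2))) := by
    rw [show ({C, B, A} : Set _) = {A, B, C} by ext x; simp; tauto]; exact hncol
  have iACB : incenterPt A B C = incenterPt A C B := incenterPt_swap A B C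
  have iBCA : incenterPt A B C = incenterPt B C A := incenterPt_cycle A B C
  have iBAC : incenterPt A B C = incenterPt B A C :=
    (incenterPt_cycle A B C).trans (incenterPt_swap B C A)
  have iCAB : incenterPt A B C = incenterPt C A B :=
    (incenterPt_cycle A B C).trans (incenterPt_cycle B C A)
  have iCBA : incenterPt A B C = incenterPt C B A :=
    iCAB.trans (incenterPt_swap C A B)
  refine ⟨⟨?_, ?_⟩, ⟨?_, ?_⟩, ⟨?_, ?_⟩, ⟨?_, ?_⟩, ⟨?_, ?_⟩, ⟨?_, ?_⟩⟩
  · exact (master A B C hncol).1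
  · exact (master A B C hncol).2
  · rw [iACB, excenterPt_swap C A B, excenterPt_swap A B C]
    exact (master A C B nc2).1
  · rw [iACB, EuclideanGeometry.angle_comm B A C]
    exact (master A C B nc2).2
  · rw [iBAC, show excenterPt A B C = excenterPt A C B from excenterPt_swap A B C,
      show excenterPt B C A = excenterPt B A C from (excenterPt_swap B A C).symm]
    exact (master B A C nc3).1
  · rw [iBAC]
    exact (master B A C nc3).2
  · rw [iBCA]
    exact (master B C A nc4).1
  · rw [iBCA, EuclideanGeometry.angle_comm A B C]
    exact (master B C A nc4).2
  · rw [iCAB]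
    exact (master C A B nc5).1
  · rw [iCAB]
    exact (master C A B nc5).2
  · rw [iCBA, show excenterPt B C A = excenterPt B A C from (excenterPt_swap B A C).symm,
      show excenterPt C A B = excenterPt C B A from excenterPt_swap C A B]
    exact (master C B A nc6).1
  · rw [iCBA, EuclideanGeometry.angle_comm A C B]
    exact (master C B A nc6).2
end

section
/- Let A, B, C be three non-collinear points in the Euclidean plane, with excenters E_A and E_B. Then the unsigned angles ∠ E_A A E_B and ∠ E_A B E_B are both right angles (π/2); equivalently, the vertices A and B both lie on the circle having the segment from E_A to E_B as a diameter. -/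
open EuclideanGeometry

lemma strict_tri {A B C : EuclideanSpace ℝ (Fin 2)}
    (h : AffineIndependent ℝ ![A, B, C]) : dist B C < dist C A + dist A B := by
  rw [affineIndependent_iff_not_collinear] at h
  have hw : ¬ Wbtw ℝ B A C := fun hw => h (by
    refine hw.collinear.subset ?_
    intro x hx
    rcases hx with ⟨i, rfl⟩
    fin_cases i <;> simp [Set.mem_insert_iff])
  have hle := dist_triangle B A C
  rcases lt_or_eq_of_le hle with hlt | heq
  · calc dist B C < dist B A + dist A C := hlt
      _ = dist C A + dist A B := by rw [dist_comm B A, dist_comm A C]; ring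
  · exact absurd (dist_add_dist_eq_iff.mp heq.symm) hw

lemma rot_ai {A B C : EuclideanSpace ℝ (Fin 2)}
    (h : AffineIndependent ℝ ![A, B, C]) : AffineIndependent ℝ ![B, C, A] := by
  rw [affineIndependent_iff_not_collinear] at h ⊢
  intro hc; apply h
  refine hc.subset ?_
  intro x hx
  rcases hx with ⟨i, rfl⟩
  fin_cases i <;> simp [Set.mem_insert_iff]

lemma inner_key {E : Type*} [NormedAddCommGroup E] [InnerProductSpace ℝ E]
    (u v : E) (b c : ℝ) (hu : ‖u‖ = c) (hv : ‖v‖ = b) :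
    (inner ℝ (b • u + c • v) (-b • u + c • v) : ℝ) = 0 := by
  simp only [inner_add_left, inner_add_right, inner_neg_left, inner_neg_right,
    real_inner_smul_left, real_inner_smul_right, neg_smul]
  simp only [real_inner_self_eq_norm_sq, hu, hv]
  rw [real_inner_comm v u]
  ring

lemma median_helper {E : Type*} [NormedAddCommGroup E] [InnerProductSpace ℝ E] (P X Y : E)
    (hinner : (inner ℝ (X - P) (Y - P) : ℝ) = 0) :
    dist P (midpoint ℝ X Y) = dist X Y / 2 := by
  have hm : P - midpoint ℝ X Y = (-(1/2) : ℝ) • ((X - P) + (Y - P)) := by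
    rw [midpoint_eq_smul_add]
    match_scalars <;> norm_num
  have hxy : X - Y = (X - P) - (Y - P) := by abel
  have hn : ‖(X - P) + (Y - P)‖ = ‖(X - P) - (Y - P)‖ := by
    have h1 := norm_add_sq_real (X - P) (Y - P)
    have h2 := norm_sub_sq_real (X - P) (Y - P)
    nlinarith [norm_nonneg ((X - P) + (Y - P)), norm_nonneg ((X - P) - (Y - P))]
  rw [dist_eq_norm, dist_eq_norm, hm, hxy, norm_smul]
  rw [hn]
  simp [Real.norm_eq_abs]
  ring

/-- The angles `∠ E_A A E_B` and `∠ E_A B E_B` are right angles; equivalently, `A` and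
`B` lie on the circle with the segment from `E_A` to `E_B` as a diameter. -/
theorem excenter_angles_right (A B C : EuclideanSpace ℝ (Fin 2))
    (h : AffineIndependent ℝ ![A, B, C]) :
    ∠ (excenterPt A B C) A (excenterPt B C A) = Real.pi / 2 ∧
    ∠ (excenterPt A B C) B (excenterPt B C A) = Real.pi / 2 ∧
    dist A (midpoint ℝ (excenterPt A B C) (excenterPt B C A)) =
      dist (excenterPt A B C) (excenterPt B C A) / 2 ∧
    dist B (midpoint ℝ (excenterPt A B C) (excenterPt B C A)) =
      dist (excenterPt A B C) (excenterPt B C A) / 2 := by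
  set a := dist B C with ha
  set b := dist C A with hb
  set c := dist A B with hc
  have hs1 : (0:ℝ) < -a + b + c := by have := strict_tri h; linarith
  have hs2 : (0:ℝ) < a - b + c := by
    have := strict_tri (rot_ai h)
    rw [← ha, ← hb, ← hc] at this
    linarith
  have hne1 : (-a + b + c) ≠ 0 := hs1.ne'
  have hne2 : (a - b + c) ≠ 0 := hs2.ne' 
  -- vectors at A
  set u := (B - A : EuclideanSpace ℝ (Fin 2)) with hu
  set v := (C - A : EuclideanSpace ℝ (Fin 2)) with hv
  have hnu : ‖u‖ = c := by rw [hu, hc, dist_eq_norm, ← norm_neg]; congr 1; abel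
  have hnv : ‖v‖ = b := by rw [hv, hb, dist_eq_norm]
  have hEA : excenterPt A B C - A = (-a + b + c)⁻¹ • (b • u + c • v) := by
    rw [excenterPt, ← ha, ← hb, ← hc, hu, hv]
    match_scalars <;> field_simp <;> ring
  have hEB : excenterPt B C A - A = (a - b + c)⁻¹ • ((-b) • u + c • v) := by
    rw [excenterPt, ← ha, ← hb, ← hc, hu, hv]
    have hd : (-b + c + a) = (a - b + c) := by ring
    rw [hd]
    match_scalars <;> field_simp <;> ring
  have hinnerA : (inner ℝ (excenterPt A B C - A) (excenterPt B C A - A) : ℝ) = 0 := by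
    rw [hEA, hEB, real_inner_smul_left, real_inner_smul_right, inner_key u v b c hnu hnv]
    ring
  -- vectors at B
  set u' := (A - B : EuclideanSpace ℝ (Fin 2)) with hu'
  set v' := (C - B : EuclideanSpace ℝ (Fin 2)) with hv'
  have hnu' : ‖u'‖ = c := by rw [hu', hc, dist_eq_norm]
  have hnv' : ‖v'‖ = a := by rw [hv', ha, dist_eq_norm, ← norm_neg]; congr 1; abel
  have hEA' : excenterPt A B C - B = (-a + b + c)⁻¹ • ((-a) • u' + c • v') := by
    rw [excenterPt, ← ha, ← hb, ← hc, hu', hv']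
    match_scalars <;> field_simp <;> ring
  have hEB' : excenterPt B C A - B = (a - b + c)⁻¹ • (a • u' + c • v') := by
    rw [excenterPt, ← ha, ← hb, ← hc, hu', hv']
    have hd : (-b + c + a) = (a - b + c) := by ring
    rw [hd]
    match_scalars <;> field_simp <;> ring
  have hinnerB : (inner ℝ (excenterPt A B C - B) (excenterPt B C A - B) : ℝ) = 0 := by
    rw [hEA', hEB', real_inner_smul_left, real_inner_smul_right, real_inner_comm,
      inner_key u' v' a c hnu' hnv']
    ring
  refine ⟨?_, ?_, ?_, ?_⟩
  · rw [EuclideanGeometry.angle, show (excenterPt A B C -ᵥ A) = excenterPt A B C - A from rfl,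
      show (excenterPt B C A -ᵥ A) = excenterPt B C A - A from rfl]
    exact (InnerProductGeometry.inner_eq_zero_iff_angle_eq_pi_div_two _ _).mp hinnerA
  · rw [EuclideanGeometry.angle, show (excenterPt A B C -ᵥ B) = excenterPt A B C - B from rfl,
      show (excenterPt B C A -ᵥ B) = excenterPt B C A - B from rfl]
    exact (InnerProductGeometry.inner_eq_zero_iff_angle_eq_pi_div_two _ _).mp hinnerB
  · exact median_helper A _ _ hinnerA
  · exact median_helper B _ _ hinnerB
end

section
/- Let A, B, C be three non-collinear points in the Euclidean plane, with incenter I and excenters E_A, E_B, E_C. Then dist(E_A,I)/dist(E_A,E_C) = dist(E_A,B)/dist(E_A,A) and dist(E_B,E_C)/dist(E_B,I) = dist(E_B,B)/dist(E_B,A). -/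
private lemma norm_comb_sq (u v : EuclideanSpace ℝ (Fin 2)) (x y : ℝ) :
    ‖x•u + y•v‖^2 = x^2*‖u‖^2 + 2*(x*y)*(inner ℝ u v : ℝ) + y^2*‖v‖^2 := by
  rw [norm_add_sq_real, real_inner_smul_left, real_inner_smul_right, norm_smul, norm_smul]
  simp [mul_pow, sq_abs]
  ring

private lemma inv_smul_sub_pt {r : ℝ} (hr : r ≠ 0) (X P M : EuclideanSpace ℝ (Fin 2))
    (hM : X - r • P = M) : r⁻¹ • X - P = r⁻¹ • M := by
  rw [← hM, smul_sub, inv_smul_smul₀ hr]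

private lemma inv_smul_sub_inv_smul {r s t : ℝ} (hr : r ≠ 0) (hs : s ≠ 0)
    (X Y M : EuclideanSpace ℝ (Fin 2)) (hM : s • X - r • Y = t • M) :
    r⁻¹ • X - s⁻¹ • Y = (t * (r * s)⁻¹) • M := by
  have h1 : (r * s)⁻¹ * s = r⁻¹ := by
    rw [mul_inv, mul_assoc, inv_mul_cancel₀ hs, mul_one]
  have h2 : (r * s)⁻¹ * r = s⁻¹ := by
    rw [mul_inv, mul_comm r⁻¹ s⁻¹, mul_assoc, inv_mul_cancel₀ hr, mul_one]
  have h3 : r⁻¹ • X - s⁻¹ • Y = (r * s)⁻¹ • (s • X - r • Y) := by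
    rw [smul_sub, smul_smul, smul_smul, h1, h2]
  rw [h3, hM, smul_smul, mul_comm]

private lemma ratio_helper {k1 k2 k3 k4 x y : ℝ} (hx : 0 < x) (hy : 0 < y)
    (h1 : 0 < k1) (h2 : 0 < k2) (h3 : 0 < k3) (h4 : 0 < k4)
    (key : (k1 * k4) * (x * x) = (k2 * k3) * (y * y)) :
    (k1 * x) / (k2 * y) = (k3 * y) / (k4 * x) := by
  rw [div_eq_div_iff (by positivity) (by positivity)]
  linear_combination key

set_option maxHeartbeats 1000000 in
/-- The two distance-ratio identities
`|E_A I|/|E_A E_C| = |E_A B|/|E_A A|` and `|E_B E_C|/|E_B I| = |E_B B|/|E_B A|`. -/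
theorem dist_ratio_identities (A B C : EuclideanSpace ℝ (Fin 2))
    (h : AffineIndependent ℝ ![A, B, C])
    (I : EuclideanSpace ℝ (Fin 2)) (hI : I = incenterPt A B C)
    (EA : EuclideanSpace ℝ (Fin 2)) (hEA : EA = excenterPt A B C)
    (EB : EuclideanSpace ℝ (Fin 2)) (hEB : EB = excenterPt B C A)
    (EC : EuclideanSpace ℝ (Fin 2)) (hEC : EC = excenterPt C A B) :
    dist EA I / dist EA EC = dist EA B / dist EA A ∧
    dist EB EC / dist EB I = dist EB B / dist EB A := by
  have hcol : ¬ Collinear ℝ ({A, B, C} : Set (EuclideanSpace ℝ (Fin 2))) :=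
    affineIndependent_iff_not_collinear_set.mp h
  set a := dist B C with ha'
  set b := dist C A with hb'
  set c := dist A B with hc'
  -- strict triangle inequalities
  have hsub : ∀ {x y z : EuclideanSpace ℝ (Fin 2)}, Collinear ℝ {x, y, z} →
      ({A, B, C} : Set _) ⊆ {x, y, z} → False :=
    fun h1 hs => hcol (h1.subset hs)
  have hβ : 0 < -a + b + c := by
    rcases lt_or_eq_of_le (dist_triangle B A C) with h1 | h1
    · rw [dist_comm B A, dist_comm A C] at h1
      simp only [← ha', ← hb', ← hc'] at h1; linarith
    · exact absurd ((dist_add_dist_eq_iff.mp h1.symm).collinear) (fun hc2 =>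
        hsub hc2 (by intro w hw; simp only [Set.mem_insert_iff, Set.mem_singleton_iff] at hw ⊢; tauto))
  have hδ : 0 < a - b + c := by
    rcases lt_or_eq_of_le (dist_triangle C B A) with h1 | h1
    · rw [dist_comm C B, dist_comm B A, dist_comm C A] at h1
      simp only [← ha', ← hb', ← hc'] at h1
      rw [dist_comm A C] at h1
      simp only [← hb'] at h1; linarith
    · exact absurd ((dist_add_dist_eq_iff.mp h1.symm).collinear) (fun hc2 =>
        hsub hc2 (by intro w hw; simp only [Set.mem_insert_iff, Set.mem_singleton_iff] at hw ⊢; tauto))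
  have hγ : 0 < a + b - c := by
    rcases lt_or_eq_of_le (dist_triangle A C B) with h1 | h1
    · rw [dist_comm A C, dist_comm C B] at h1
      simp only [← ha', ← hb', ← hc'] at h1; linarith
    · exact absurd ((dist_add_dist_eq_iff.mp h1.symm).collinear) (fun hc2 =>
        hsub hc2 (by intro w hw; simp only [Set.mem_insert_iff, Set.mem_singleton_iff] at hw ⊢; tauto))
  have ha : 0 < a := by linarith
  have hb : 0 < b := by linarith
  have hc : 0 < c := by linarith
  have hσ : 0 < a + b + c := by linarith
  have hβ0 : (-a + b + c) ≠ 0 := ne_of_gt hβ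
  have hδ0 : (a - b + c) ≠ 0 := ne_of_gt hδ
  have hγ0 : (a + b - c) ≠ 0 := ne_of_gt hγ
  have hσ0 : (a + b + c) ≠ 0 := ne_of_gt hσ
  -- basic norms and inner product
  have hu : ‖B - A‖ = c := by rw [← dist_eq_norm, dist_comm]
  have hv : ‖C - A‖ = b := by rw [← dist_eq_norm]
  have hp : 2 * (inner ℝ (B - A) (C - A) : ℝ) = b^2 + c^2 - a^2 := by
    have h2 := norm_sub_sq_real (B - A) (C - A)
    rw [show (B - A) - (C - A) = B - C by abel, ← dist_eq_norm, ← ha', hu, hv] at h2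
    linarith
  set p : ℝ := (inner ℝ (B - A) (C - A) : ℝ) with hp'
  -- key vectors
  set V : EuclideanSpace ℝ (Fin 2) := b • (B - A) + c • (C - A) with hV'
  set W : EuclideanSpace ℝ (Fin 2) := (a - c) • (B - A) + c • (C - A) with hW'
  set T : EuclideanSpace ℝ (Fin 2) := (-b) • (B - A) + c • (C - A) with hT'
  set U : EuclideanSpace ℝ (Fin 2) := (-(a + c)) • (B - A) + c • (C - A) with hU'
  -- vector identities
  have e1 : EA - A = (-a + b + c)⁻¹ • V := by
    rw [hEA, excenterPt, hV']
    simp only [← ha', ← hb', ← hc']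
    exact inv_smul_sub_pt hβ0 _ _ _ (by module)
  have e2 : EA - B = (-a + b + c)⁻¹ • W := by
    rw [hEA, excenterPt, hW']
    simp only [← ha', ← hb', ← hc']
    exact inv_smul_sub_pt hβ0 _ _ _ (by module)
  have e3 : EA - I = (2 * a * ((-a + b + c) * (a + b + c))⁻¹) • V := by
    rw [hEA, hI, excenterPt, incenterPt, hV']
    simp only [← ha', ← hb', ← hc']
    exact inv_smul_sub_inv_smul hβ0 hσ0 _ _ _ (by module)
  have e4 : EA - EC = (2 * b * ((-a + b + c) * (a + b - c))⁻¹) • W := by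
    rw [hEA, hEC, excenterPt, excenterPt, hW']
    simp only [← ha', ← hb', ← hc']
    rw [show -c + a + b = a + b - c from by ring]
    exact inv_smul_sub_inv_smul hβ0 hγ0 _ _ _ (by module)
  have e5 : EB - A = (a - b + c)⁻¹ • T := by
    rw [hEB, excenterPt, hT']
    simp only [← ha', ← hb', ← hc']
    rw [show -b + c + a = a - b + c from by ring]
    exact inv_smul_sub_pt hδ0 _ _ _ (by module)
  have e6 : EB - B = (a - b + c)⁻¹ • U := by
    rw [hEB, excenterPt, hU']
    simp only [← ha', ← hb', ← hc']
    rw [show -b + c + a = a - b + c from by ring]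
    exact inv_smul_sub_pt hδ0 _ _ _ (by module)
  have e7 : EB - EC = (2 * a * ((a - b + c) * (a + b - c))⁻¹) • T := by
    rw [hEB, hEC, excenterPt, excenterPt, hT']
    simp only [← ha', ← hb', ← hc']
    rw [show -b + c + a = a - b + c from by ring, show -c + a + b = a + b - c from by ring]
    exact inv_smul_sub_inv_smul hδ0 hγ0 _ _ _ (by module)
  have e8 : EB - I = (2 * b * ((a - b + c) * (a + b + c))⁻¹) • U := by
    rw [hEB, hI, excenterPt, incenterPt, hU']
    simp only [← ha', ← hb', ← hc']
    rw [show -b + c + a = a - b + c from by ring]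
    exact inv_smul_sub_inv_smul hδ0 hσ0 _ _ _ (by module)
  -- norms of key vectors
  have hV2 : ‖V‖^2 = b * c * ((a + b + c) * (-a + b + c)) := by
    rw [hV', norm_comb_sq, hu, hv, ← hp']; linear_combination (b * c) * hp
  have hW2 : ‖W‖^2 = a * c * ((-a + b + c) * (a + b - c)) := by
    rw [hW', norm_comb_sq, hu, hv, ← hp']; linear_combination ((a - c) * c) * hp
  have hT2 : ‖T‖^2 = b * c * ((a - b + c) * (a + b - c)) := by
    rw [hT', norm_comb_sq, hu, hv, ← hp']; linear_combination (-(b * c)) * hp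
  have hU2 : ‖U‖^2 = a * c * ((a - b + c) * (a + b + c)) := by
    rw [hU', norm_comb_sq, hu, hv, ← hp']; linear_combination (-((a + c) * c)) * hp
  -- norms are positive
  have hVpos : 0 < ‖V‖ := by
    have h2 : 0 < ‖V‖^2 := by rw [hV2]; positivity
    have h0 : V ≠ 0 := fun h0 => by simp [h0] at h2
    exact norm_pos_iff.mpr h0
  have hWpos : 0 < ‖W‖ := by
    have h2 : 0 < ‖W‖^2 := by rw [hW2]; positivity
    have h0 : W ≠ 0 := fun h0 => by simp [h0] at h2
    exact norm_pos_iff.mpr h0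
  have hTpos : 0 < ‖T‖ := by
    have h2 : 0 < ‖T‖^2 := by rw [hT2]; positivity
    have h0 : T ≠ 0 := fun h0 => by simp [h0] at h2
    exact norm_pos_iff.mpr h0
  have hUpos : 0 < ‖U‖ := by
    have h2 : 0 < ‖U‖^2 := by rw [hU2]; positivity
    have h0 : U ≠ 0 := fun h0 => by simp [h0] at h2
    exact norm_pos_iff.mpr h0
  -- distance formulas
  have dA : dist EA A = (-a + b + c)⁻¹ * ‖V‖ := by
    rw [dist_eq_norm, e1, norm_smul, Real.norm_eq_abs, abs_of_pos (by positivity)]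
  have dB : dist EA B = (-a + b + c)⁻¹ * ‖W‖ := by
    rw [dist_eq_norm, e2, norm_smul, Real.norm_eq_abs, abs_of_pos (by positivity)]
  have dI : dist EA I = (2 * a * ((-a + b + c) * (a + b + c))⁻¹) * ‖V‖ := by
    rw [dist_eq_norm, e3, norm_smul, Real.norm_eq_abs, abs_of_pos (by positivity)]
  have dEC : dist EA EC = (2 * b * ((-a + b + c) * (a + b - c))⁻¹) * ‖W‖ := by
    rw [dist_eq_norm, e4, norm_smul, Real.norm_eq_abs, abs_of_pos (by positivity)]
  have dA' : dist EB A = (a - b + c)⁻¹ * ‖T‖ := by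
    rw [dist_eq_norm, e5, norm_smul, Real.norm_eq_abs, abs_of_pos (by positivity)]
  have dB' : dist EB B = (a - b + c)⁻¹ * ‖U‖ := by
    rw [dist_eq_norm, e6, norm_smul, Real.norm_eq_abs, abs_of_pos (by positivity)]
  have dEC' : dist EB EC = (2 * a * ((a - b + c) * (a + b - c))⁻¹) * ‖T‖ := by
    rw [dist_eq_norm, e7, norm_smul, Real.norm_eq_abs, abs_of_pos (by positivity)]
  have dI' : dist EB I = (2 * b * ((a - b + c) * (a + b + c))⁻¹) * ‖U‖ := by
    rw [dist_eq_norm, e8, norm_smul, Real.norm_eq_abs, abs_of_pos (by positivity)]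
  constructor
  · rw [dI, dEC, dB, dA]
    refine ratio_helper hVpos hWpos (by positivity) (by positivity) (by positivity)
      (by positivity) ?_
    rw [← pow_two ‖V‖, ← pow_two ‖W‖, hV2, hW2]
    field_simp
  · rw [dEC', dI', dB', dA']
    refine ratio_helper hTpos hUpos (by positivity) (by positivity) (by positivity)
      (by positivity) ?_
    rw [← pow_two ‖T‖, ← pow_two ‖U‖, hT2, hU2]
    field_simp
end
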